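/- For the gluing Z = X ⋉_T Y of noncommutative schemes X = Perf-dg(R), Y = Perf-dg(S) along a DG S-R-bimodule T, the glued scheme Z is proper if and only if X and Y are proper and the total cohomology ⊕ᵢ Hⁱ(T) is finite-dimensional over k. -/

import Mathlib

open CategoryTheory Limits DirectSum

/-- A cochain complex of `k`-vector spaces (e.g. the underlying complex of a DG algebra or
DG bimodule) has finite-dimensional total cohomology if `⊕ᵢ Hⁱ` is finite-dimensional. -/
def TotalCohomologyFiniteDimensional (k : Type) [Field k]
    (X : CochainComplex (ModuleCat k) ℤ) : Prop :=
  FiniteDimensional k (⨁ i : ℤ, (X.homology i : Type))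

section aux

variable (k : Type) [Field k] (A B : ℤ → Type)
    [∀ i, AddCommGroup (A i)] [∀ i, Module k (A i)]
    [∀ i, AddCommGroup (B i)] [∀ i, Module k (B i)]

lemma ds_comp1 :
    ((DFinsupp.mapRange.linearMap (fun i => LinearMap.fst k (A i) (B i))).prod
        (DFinsupp.mapRange.linearMap (fun i => LinearMap.snd k (A i) (B i)))).comp
      ((DFinsupp.mapRange.linearMap (fun i => LinearMap.inl k (A i) (B i))).comp
          (LinearMap.fst k _ _) +
        (DFinsupp.mapRange.linearMap (fun i => LinearMap.inr k (A i) (B i))).comp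
          (LinearMap.snd k _ _)) =
    LinearMap.id := by
  ext i x <;> simp

lemma ds_comp2 :
    ((DFinsupp.mapRange.linearMap (fun i => LinearMap.inl k (A i) (B i))).comp
          (LinearMap.fst k _ _) +
        (DFinsupp.mapRange.linearMap (fun i => LinearMap.inr k (A i) (B i))).comp
          (LinearMap.snd k _ _)).comp
      ((DFinsupp.mapRange.linearMap (fun i => LinearMap.fst k (A i) (B i))).prod
        (DFinsupp.mapRange.linearMap (fun i => LinearMap.snd k (A i) (B i)))) =
    LinearMap.id := by
  ext i x <;> simp [← DFinsupp.single_add]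

/-- `⨁ᵢ (Aᵢ × Bᵢ) ≃ (⨁ᵢ Aᵢ) × (⨁ᵢ Bᵢ)` as `k`-vector spaces. -/
noncomputable def prodDirectSum :
    (⨁ i, (A i × B i)) ≃ₗ[k] (⨁ i, A i) × (⨁ i, B i) :=
  LinearEquiv.ofLinear
    ((DFinsupp.mapRange.linearMap (fun i => LinearMap.fst k (A i) (B i))).prod
      (DFinsupp.mapRange.linearMap (fun i => LinearMap.snd k (A i) (B i))))
    ((DFinsupp.mapRange.linearMap (fun i => LinearMap.inl k (A i) (B i))).comp
        (LinearMap.fst k _ _) +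
      (DFinsupp.mapRange.linearMap (fun i => LinearMap.inr k (A i) (B i))).comp
        (LinearMap.snd k _ _))
    (ds_comp1 k A B) (ds_comp2 k A B)

end aux

/-- Homology of a biproduct of complexes is the product of the homologies. -/
noncomputable def homologyBiprodEquiv (k : Type) [Field k]
    (X Y : CochainComplex (ModuleCat k) ℤ) (i : ℤ) :
    ↥((X ⊞ Y).homology i) ≃ₗ[k] ↥(X.homology i) × ↥(Y.homology i) := by
  let F := HomologicalComplex.homologyFunctor (ModuleCat k) (ComplexShape.up ℤ) i
  haveI := preservesBinaryBiproducts_of_preservesBiproducts F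
  exact ((F.mapBiprod X Y) ≪≫ ModuleCat.biprodIsoProd _ _).toLinearEquiv

lemma tcfd_biprod_iff (k : Type) [Field k] (X Y : CochainComplex (ModuleCat k) ℤ) :
    TotalCohomologyFiniteDimensional k (X ⊞ Y) ↔
      TotalCohomologyFiniteDimensional k X ∧ TotalCohomologyFiniteDimensional k Y := by
  unfold TotalCohomologyFiniteDimensional
  have e : (⨁ i : ℤ, ((X ⊞ Y).homology i : Type)) ≃ₗ[k]
      (⨁ i : ℤ, (X.homology i : Type)) × (⨁ i : ℤ, (Y.homology i : Type)) :=
    (DFinsupp.mapRange.linearEquiv (fun i => homologyBiprodEquiv k X Y i)).trans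
      (prodDirectSum k _ _)
  constructor
  · intro h
    haveI : FiniteDimensional k
        ((⨁ i : ℤ, (X.homology i : Type)) × (⨁ i : ℤ, (Y.homology i : Type))) :=
      e.finiteDimensional
    exact ⟨Module.Finite.of_surjective
        (LinearMap.fst k (⨁ i : ℤ, (X.homology i : Type)) (⨁ i : ℤ, (Y.homology i : Type)))
        Prod.fst_surjective,
      Module.Finite.of_surjective
        (LinearMap.snd k (⨁ i : ℤ, (X.homology i : Type)) (⨁ i : ℤ, (Y.homology i : Type)))
        Prod.snd_surjective⟩
  · rintro ⟨h1, h2⟩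
    exact e.symm.finiteDimensional

/-- The gluing `Z = X ⋉_T Y` of noncommutative schemes `X = Perf-dg(R)`, `Y = Perf-dg(S)`
along a DG `S-R`-bimodule `T` is proper iff `X`, `Y` are proper and `⊕ᵢ Hⁱ(T)` is
finite-dimensional.  In terms of DG algebras (properness of `Perf-dg(A)` being
finite-dimensionality of the total cohomology of `A`): the lower triangular DG algebra
`C = R ⋉_T S`, whose underlying complex is `R ⊕ S ⊕ T`, has finite-dimensional total
cohomology iff `R`, `S` and `T` each do. -/
theorem gluing_proper_iff (k : Type) [Field k]
    (R S T : CochainComplex (ModuleCat k) ℤ) :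
    TotalCohomologyFiniteDimensional k (R ⊞ S ⊞ T) ↔
      (TotalCohomologyFiniteDimensional k R ∧ TotalCohomologyFiniteDimensional k S ∧
        TotalCohomologyFiniteDimensional k T) := by
  rw [tcfd_biprod_iff, tcfd_biprod_iff]
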